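/- Let ψ : ℝ^n → ℝ, let A ⊆ ℝ^n be a convex set with nonempty interior, and let E denote the set of all x ∈ ℝ^n whose coordinates are pairwise distinct and all non-zero. Assume ψ is continuous on A and differentiable at every point of A ∩ E. Then, as elements of [0,∞], Lip(ψ|_A) = sup_{x ∈ A ∩ E} |∇ψ(x)|. -/

import Mathlib

open scoped ENNReal

open Set

lemma mvt_open {f : ℝ → ℝ} {C a b : ℝ} (hab : a ≤ b) (hf : ContinuousOn f (Set.Icc a b))
    (hd : ∀ t ∈ Set.Ioo a b, ∃ d, HasDerivAt f d t ∧ |d| ≤ C) :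
    |f b - f a| ≤ C * (b - a) := by
  rcases eq_or_lt_of_le hab with rfl | hab
  · simp
  classical
  set F' : ℝ → ℝ := fun t => if h : ∃ d, HasDerivAt f d t ∧ |d| ≤ C then h.choose else 0 with hF'
  have hF'spec : ∀ t ∈ Set.Ioo a b, HasDerivAt f (F' t) t ∧ |F' t| ≤ C := by
    intro t ht
    have h := hd t ht
    simp only [hF', dif_pos h]
    exact h.choose_spec
  have key : ∀ a' ∈ Set.Ioo a b, |f b - f a'| ≤ C * (b - a') := by
    intro a' ha'
    have := norm_image_sub_le_of_norm_deriv_right_le_segment (E := ℝ) (f := f) (f' := F')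
      (a := a') (b := b) (hf.mono (Set.Icc_subset_Icc ha'.1.le le_rfl))
      (fun x hx => ((hF'spec x ⟨ha'.1.trans_le hx.1, hx.2⟩).1).hasDerivWithinAt)
      (fun x hx => (hF'spec x ⟨ha'.1.trans_le hx.1, hx.2⟩).2) b ⟨ha'.2.le, le_rfl⟩
    simpa [Real.norm_eq_abs] using this
  have hne : Filter.NeBot (nhdsWithin a (Set.Ioo a b)) := left_nhdsWithin_Ioo_neBot hab
  have h1 : Filter.Tendsto (fun a' => |f b - f a'|) (nhdsWithin a (Set.Ioo a b))
      (nhds (|f b - f a|)) := by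
    have : Filter.Tendsto f (nhdsWithin a (Set.Ioo a b)) (nhds (f a)) :=
      (hf.continuousWithinAt ⟨le_rfl, hab.le⟩).mono_left
        (nhdsWithin_mono _ Set.Ioo_subset_Icc_self)
    exact ((tendsto_const_nhds.sub this).abs)
  have h2 : Filter.Tendsto (fun a' => C * (b - a')) (nhdsWithin a (Set.Ioo a b))
      (nhds (C * (b - a))) := by
    exact (tendsto_const_nhds.mul (tendsto_const_nhds.sub
      (Filter.tendsto_id.mono_left nhdsWithin_le_nhds)))
  exact le_of_tendsto_of_tendsto h1 h2
    (eventually_mem_nhdsWithin.mono (fun a' ha' => key a' ha'))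

lemma mvt_finite (S : Finset ℝ) : ∀ {f : ℝ → ℝ} {C a b : ℝ}, a ≤ b →
    ContinuousOn f (Set.Icc a b) →
    (∀ t ∈ Set.Ioo a b, t ∉ S → ∃ d, HasDerivAt f d t ∧ |d| ≤ C) →
    |f b - f a| ≤ C * (b - a) := by
  induction S using Finset.induction_on with
  | empty =>
    intro f C a b hab hf hd
    exact mvt_open hab hf (fun t ht => hd t ht (by simp))
  | @insert s S hs IH =>
    intro f C a b hab hf hd
    by_cases hsab : s ∈ Set.Ioo a b
    · have h1 : |f s - f a| ≤ C * (s - a) := by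
        refine IH hsab.1.le (hf.mono (Set.Icc_subset_Icc le_rfl hsab.2.le)) ?_
        intro t ht htS
        refine hd t ⟨ht.1, ht.2.trans hsab.2⟩ ?_
        simp only [Finset.mem_insert, not_or]
        exact ⟨ht.2.ne, htS⟩
      have h2 : |f b - f s| ≤ C * (b - s) := by
        refine IH hsab.2.le (hf.mono (Set.Icc_subset_Icc hsab.1.le le_rfl)) ?_
        intro t ht htS
        refine hd t ⟨hsab.1.trans ht.1, ht.2⟩ ?_
        simp only [Finset.mem_insert, not_or]
        exact ⟨ht.1.ne', htS⟩
      calc |f b - f a| ≤ |f b - f s| + |f s - f a| := abs_sub_le _ _ _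
        _ ≤ C * (b - s) + C * (s - a) := add_le_add h2 h1
        _ = C * (b - a) := by ring
    · refine IH hab hf ?_
      intro t ht htS
      refine hd t ht ?_
      simp only [Finset.mem_insert, not_or]
      exact ⟨fun h => hsab (h ▸ ht), htS⟩

lemma Eset_open (n : ℕ) : IsOpen {x : EuclideanSpace ℝ (Fin n) |
    (∀ i j : Fin n, i ≠ j → x i ≠ x j) ∧ ∀ i, x i ≠ 0} := by
  have hcoord : ∀ i : Fin n, Continuous fun x : EuclideanSpace ℝ (Fin n) => x i :=
    fun i => (EuclideanSpace.proj (𝕜 := ℝ) i).continuous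
  have : {x : EuclideanSpace ℝ (Fin n) | (∀ i j : Fin n, i ≠ j → x i ≠ x j) ∧ ∀ i, x i ≠ 0} =
      (⋂ i, ⋂ j, {x : EuclideanSpace ℝ (Fin n) | i ≠ j → x i ≠ x j}) ∩
        ⋂ i, {x : EuclideanSpace ℝ (Fin n) | x i ≠ 0} := by
    ext x; simp [Set.mem_iInter, forall_and]
  rw [this]
  refine IsOpen.inter (isOpen_iInter_of_finite fun i => isOpen_iInter_of_finite fun j => ?_)
    (isOpen_iInter_of_finite fun i => ?_)
  · by_cases hij : i = j
    · simp [hij]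
    · have : {x : EuclideanSpace ℝ (Fin n) | i ≠ j → x i ≠ x j} =
          {x : EuclideanSpace ℝ (Fin n) | x i ≠ x j} := by
        ext x; simp [hij]
      rw [this]
      exact isOpen_ne_fun (hcoord i) (hcoord j)
  · exact isOpen_ne_fun (hcoord i) continuous_const

open MeasureTheory in
lemma Eset_dense (n : ℕ) : Dense {x : EuclideanSpace ℝ (Fin n) |
    (∀ i j : Fin n, i ≠ j → x i ≠ x j) ∧ ∀ i, x i ≠ 0} := by
  set E := {x : EuclideanSpace ℝ (Fin n) |
    (∀ i j : Fin n, i ≠ j → x i ≠ x j) ∧ ∀ i, x i ≠ 0} with hE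
  have hker : ∀ i j : Fin n, i ≠ j →
      volume {x : EuclideanSpace ℝ (Fin n) | x i = x j} = 0 := by
    intro i j hij
    set ℓ := (EuclideanSpace.proj (𝕜 := ℝ) (ι := Fin n) i) - EuclideanSpace.proj j with hℓ
    have hsub : {x : EuclideanSpace ℝ (Fin n) | x i = x j} ⊆
        (LinearMap.ker (ℓ.toLinearMap) : Submodule ℝ (EuclideanSpace ℝ (Fin n))) := by
      intro x hx
      simp only [SetLike.mem_coe, LinearMap.mem_ker, hℓ, ContinuousLinearMap.coe_sub,
        LinearMap.sub_apply, ContinuousLinearMap.coe_coe, PiLp.proj_apply]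
      simpa [sub_eq_zero] using hx
    refine measure_mono_null hsub (Measure.addHaar_submodule _ _ ?_)
    intro h
    have hmem : EuclideanSpace.single i (1 : ℝ) ∈ LinearMap.ker ℓ.toLinearMap := by
      rw [h]; trivial
    simp only [LinearMap.mem_ker, hℓ, ContinuousLinearMap.coe_sub, LinearMap.sub_apply,
      ContinuousLinearMap.coe_coe, PiLp.proj_apply, EuclideanSpace.single_apply] at hmem
    simp [hij.symm] at hmem
  have hker0 : ∀ i : Fin n, volume {x : EuclideanSpace ℝ (Fin n) | x i = 0} = 0 := by
    intro i
    set ℓ := (EuclideanSpace.proj (𝕜 := ℝ) (ι := Fin n) i) with hℓ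
    have hsub : {x : EuclideanSpace ℝ (Fin n) | x i = 0} ⊆
        (LinearMap.ker (ℓ.toLinearMap) : Submodule ℝ (EuclideanSpace ℝ (Fin n))) := by
      intro x hx
      simpa [hℓ] using hx
    refine measure_mono_null hsub (Measure.addHaar_submodule _ _ ?_)
    intro h
    have hmem : EuclideanSpace.single i (1 : ℝ) ∈ LinearMap.ker ℓ.toLinearMap := by
      rw [h]; trivial
    simp [hℓ, EuclideanSpace.single_apply] at hmem
  have hnull : volume Eᶜ = 0 := by
    have hsub : Eᶜ ⊆ (⋃ (p : Fin n × Fin n), {x : EuclideanSpace ℝ (Fin n) |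
        p.1 ≠ p.2 ∧ x p.1 = x p.2}) ∪ ⋃ i, {x : EuclideanSpace ℝ (Fin n) | x i = 0} := by
      intro x hx
      simp only [hE, Set.mem_compl_iff, Set.mem_setOf_eq, not_and_or, not_forall] at hx
      rcases hx with ⟨i, j, hij, hxij⟩ | ⟨i, hi⟩
      · exact Set.mem_union_left _ (Set.mem_iUnion.2 ⟨(i, j), hij, not_not.1 hxij⟩)
      · exact Set.mem_union_right _ (Set.mem_iUnion.2 ⟨i, not_not.1 hi⟩)
    refine measure_mono_null hsub (measure_union_null (measure_iUnion_null fun p => ?_)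
      (measure_iUnion_null fun i => hker0 i))
    by_cases hp : p.1 = p.2
    · have : {x : EuclideanSpace ℝ (Fin n) | p.1 ≠ p.2 ∧ x p.1 = x p.2} = ∅ := by
        ext x; simp [hp]
      simp [this]
    · exact measure_mono_null (fun x hx => hx.2) (hker p.1 p.2 hp)
  have : interior Eᶜ = ∅ := MeasureTheory.Measure.interior_eq_empty_of_null hnull
  rw [interior_eq_empty_iff_dense_compl, compl_compl] at this
  exact this

lemma seg_bound {n : ℕ} {ψ : EuclideanSpace ℝ (Fin n) → ℝ} {A : Set (EuclideanSpace ℝ (Fin n))}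
    (hA : Convex ℝ A) (hcont : ContinuousOn ψ A)
    (hdiff : ∀ x ∈ A ∩ {x : EuclideanSpace ℝ (Fin n) |
        (∀ i j : Fin n, i ≠ j → x i ≠ x j) ∧ ∀ i, x i ≠ 0},
      DifferentiableAt ℝ ψ x)
    {m : ℝ} (hm : ∀ p ∈ A ∩ {x : EuclideanSpace ℝ (Fin n) |
        (∀ i j : Fin n, i ≠ j → x i ≠ x j) ∧ ∀ i, x i ≠ 0}, ‖gradient ψ p‖ ≤ m)
    {x y : EuclideanSpace ℝ (Fin n)} (hx : x ∈ A) (hy : y ∈ A)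
    (hv : (y - x) ∈ {x : EuclideanSpace ℝ (Fin n) |
        (∀ i j : Fin n, i ≠ j → x i ≠ x j) ∧ ∀ i, x i ≠ 0}) :
    |ψ y - ψ x| ≤ m * ‖y - x‖ := by
  classical
  set v := y - x with hvdef
  set γ : ℝ → EuclideanSpace ℝ (Fin n) := fun t => x + t • v with hγ
  have hγcoord : ∀ t (i : Fin n), γ t i = x i + t * v i := by
    intro t i
    simp [hγ, PiLp.add_apply, PiLp.smul_apply, smul_eq_mul]
  have hγA : ∀ t ∈ Set.Icc (0:ℝ) 1, γ t ∈ A := by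
    intro t ht
    have := hA.add_smul_sub_mem hx hy ht
    simpa [hγ, hvdef] using this
  set T : Finset ℝ :=
    (Finset.univ.image fun p : Fin n × Fin n => (x p.2 - x p.1) / (v p.1 - v p.2)) ∪
      Finset.univ.image fun i : Fin n => -(x i) / v i with hT
  have hγE : ∀ t, t ∉ T → γ t ∈ {x : EuclideanSpace ℝ (Fin n) |
      (∀ i j : Fin n, i ≠ j → x i ≠ x j) ∧ ∀ i, x i ≠ 0} := by
    intro t ht
    constructor
    · intro i j hij heq
      apply ht
      rw [hγcoord, hγcoord] at heq
      have hvij : v i ≠ v j := hv.1 i j hij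
      have : t = (x j - x i) / (v i - v j) := by
        field_simp [sub_ne_zero.2 hvij]
        linarith
      rw [hT]
      exact Finset.mem_union_left _ (Finset.mem_image.2 ⟨(i, j), Finset.mem_univ _, this.symm⟩)
    · intro i heq
      apply ht
      rw [hγcoord] at heq
      have hvi : v i ≠ 0 := hv.2 i
      have : t = -(x i) / v i := by
        field_simp
        linarith
      rw [hT]
      exact Finset.mem_union_right _ (Finset.mem_image.2 ⟨i, Finset.mem_univ _, this.symm⟩)
  set f : ℝ → ℝ := fun t => ψ (γ t) with hf
  have hγcont : Continuous γ := continuous_const.add (continuous_id.smul continuous_const)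
  have hfc : ContinuousOn f (Set.Icc 0 1) :=
    hcont.comp hγcont.continuousOn hγA
  have hder : ∀ t ∈ Set.Ioo (0:ℝ) 1, t ∉ T → ∃ d, HasDerivAt f d t ∧ |d| ≤ m * ‖v‖ := by
    intro t ht htT
    have hpA : γ t ∈ A := hγA t (Set.Ioo_subset_Icc_self ht)
    have hpE := hγE t htT
    have hγ' : HasDerivAt γ v t := by
      simpa [hγ] using ((hasDerivAt_id t).smul_const v).const_add x
    have hψd := (hdiff (γ t) ⟨hpA, hpE⟩).hasFDerivAt
    refine ⟨fderiv ℝ ψ (γ t) v, hψd.comp_hasDerivAt t hγ', ?_⟩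
    have h1 : |fderiv ℝ ψ (γ t) v| ≤ ‖fderiv ℝ ψ (γ t)‖ * ‖v‖ :=
      (fderiv ℝ ψ (γ t)).le_opNorm v
    have h2 : ‖fderiv ℝ ψ (γ t)‖ = ‖gradient ψ (γ t)‖ := by
      rw [gradient]
      rw [LinearIsometryEquiv.norm_map]
    refine h1.trans ?_
    rw [h2]
    exact mul_le_mul_of_nonneg_right (hm _ ⟨hpA, hpE⟩) (norm_nonneg _)
  have := mvt_finite T (zero_le_one) hfc hder
  have hγ0 : γ 0 = x := by simp [hγ]
  have hγ1 : γ 1 = y := by simp [hγ, hvdef]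
  rw [hf] at this
  simpa [hγ0, hγ1] using this

lemma global_bound {n : ℕ} {ψ : EuclideanSpace ℝ (Fin n) → ℝ} {A : Set (EuclideanSpace ℝ (Fin n))}
    (hA : Convex ℝ A) (hint : (interior A).Nonempty) (hcont : ContinuousOn ψ A)
    (hdiff : ∀ x ∈ A ∩ {x : EuclideanSpace ℝ (Fin n) |
        (∀ i j : Fin n, i ≠ j → x i ≠ x j) ∧ ∀ i, x i ≠ 0},
      DifferentiableAt ℝ ψ x)
    {m : ℝ} (hm0 : 0 ≤ m)
    (hm : ∀ p ∈ A ∩ {x : EuclideanSpace ℝ (Fin n) |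
        (∀ i j : Fin n, i ≠ j → x i ≠ x j) ∧ ∀ i, x i ≠ 0}, ‖gradient ψ p‖ ≤ m)
    {x y : EuclideanSpace ℝ (Fin n)} (hx : x ∈ A) (hy : y ∈ A) :
    |ψ x - ψ y| ≤ m * ‖x - y‖ := by
  refine le_of_forall_pos_le_add ?_
  intro δ hδ
  obtain ⟨z, hz⟩ := hint
  -- continuity at x and y within A
  obtain ⟨δ1, hδ1pos, hδ1⟩ := Metric.continuousWithinAt_iff.1 (hcont x hx) (δ/4) (by linarith)
  obtain ⟨δ2, hδ2pos, hδ2⟩ := Metric.continuousWithinAt_iff.1 (hcont y hy) (δ/4) (by linarith)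
  set K : ℝ := ‖z - x‖ + ‖z - y‖ + 1 with hK
  have hKpos : 0 < K := by positivity
  have hzx : ‖z - x‖ ≤ K := by
    have : (0:ℝ) ≤ ‖z - y‖ := norm_nonneg _
    simp only [hK]; linarith
  have hzy : ‖z - y‖ ≤ K := by
    have : (0:ℝ) ≤ ‖z - x‖ := norm_nonneg _
    simp only [hK]; linarith
  set c : ℝ := min (δ1/2) (min (δ2/4) (δ/(8*(m+1)))) with hc
  have hcpos : 0 < c := by
    have : 0 < δ/(8*(m+1)) := by positivity
    simp only [hc, lt_min_iff]
    exact ⟨by linarith, by linarith, this⟩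
  have hc1 : c ≤ δ1/2 := min_le_left _ _
  have hc2 : c ≤ δ2/4 := (min_le_right _ _).trans (min_le_left _ _)
  have hc3 : c ≤ δ/(8*(m+1)) := (min_le_right _ _).trans (min_le_right _ _)
  set t : ℝ := min 1 (c / K) with ht
  have htpos : 0 < t := lt_min one_pos (by positivity)
  have ht1 : t ≤ 1 := min_le_left _ _
  have htc : ∀ w : EuclideanSpace ℝ (Fin n), ‖w - x‖ ≤ K → t * ‖w - x‖ ≤ c := by
    intro w hw
    calc t * ‖w - x‖ ≤ (c / K) * K :=
          mul_le_mul (min_le_right _ _) hw (norm_nonneg _) (by positivity)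
      _ = c := by field_simp
  have htzx : t * ‖z - x‖ ≤ c := htc z hzx
  have htzy : t * ‖z - y‖ ≤ c := by
    calc t * ‖z - y‖ ≤ (c / K) * K :=
          mul_le_mul (min_le_right _ _) hzy (norm_nonneg _) (by positivity)
      _ = c := by field_simp
  -- the interior points
  have hcombo : ∀ w : EuclideanSpace ℝ (Fin n), w ∈ A → w + t • (z - w) ∈ interior A := by
    intro w hw
    have h1 : w + t • (z - w) = (1 - t) • w + t • z := by
      rw [smul_sub, sub_smul, one_smul]; abel
    rw [h1]
    exact hA.combo_self_interior_mem_interior hw hz (by linarith) htpos (by ring)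
  set xt := x + t • (z - x) with hxt
  set yt := y + t • (z - y) with hyt
  have hxtA : xt ∈ interior A := hcombo x hx
  have hytA : yt ∈ interior A := hcombo y hy
  have hxtx : ‖xt - x‖ = t * ‖z - x‖ := by
    simp [hxt, norm_smul, abs_of_pos htpos]
  have hyty : ‖yt - y‖ = t * ‖z - y‖ := by
    simp [hyt, norm_smul, abs_of_pos htpos]
  -- choose y' near yt with y' - xt in E and y' in interior A
  have hEopen := Eset_open n
  have hEdense := Eset_dense n
  have hU : IsOpen (Metric.ball yt c ∩ interior A) := Metric.isOpen_ball.inter isOpen_interior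
  have hUne : (Metric.ball yt c ∩ interior A).Nonempty :=
    ⟨yt, Metric.mem_ball_self hcpos, hytA⟩
  have hW : IsOpen ((fun w => w - xt) '' (Metric.ball yt c ∩ interior A)) := by
    have : (fun w : EuclideanSpace ℝ (Fin n) => w - xt) = fun w => w + (-xt) := by
      funext w; simp [sub_eq_add_neg]
    rw [this]
    exact (isOpenMap_add_right _) _ hU
  have hWne : ((fun w => w - xt) '' (Metric.ball yt c ∩ interior A)).Nonempty :=
    hUne.image _
  obtain ⟨e, heE, heW⟩ := hEdense.exists_mem_open hW hWne
  obtain ⟨y', hy'U, hy'e⟩ := heW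
  have hy'A : y' ∈ A := interior_subset hy'U.2
  have hy'yt : ‖y' - yt‖ < c := by
    have := hy'U.1
    rwa [Metric.mem_ball, dist_eq_norm] at this
  have hy'xtE : y' - xt ∈ {x : EuclideanSpace ℝ (Fin n) |
      (∀ i j : Fin n, i ≠ j → x i ≠ x j) ∧ ∀ i, x i ≠ 0} := by
    have hy'e' : y' - xt = e := hy'e
    rw [hy'e']; exact heE
  -- main estimates
  have hseg : |ψ y' - ψ xt| ≤ m * ‖y' - xt‖ :=
    seg_bound hA hcont hdiff hm (interior_subset hxtA) hy'A hy'xtE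
  have hx_est : |ψ xt - ψ x| < δ/4 := by
    have := hδ1 (interior_subset hxtA) (by
      rw [dist_eq_norm, hxtx]
      calc t * ‖z - x‖ ≤ c := htzx
        _ < δ1 := by linarith)
    rwa [Real.dist_eq] at this
  have hy'y : ‖y' - y‖ < δ2 := by
    calc ‖y' - y‖ ≤ ‖y' - yt‖ + ‖yt - y‖ := by
          have : y' - y = (y' - yt) + (yt - y) := by abel
          rw [this]; exact norm_add_le _ _
      _ < c + t * ‖z - y‖ := by rw [hyty]; exact add_lt_add_of_lt_of_le hy'yt le_rfl
      _ ≤ δ2/4 + δ2/4 := add_le_add hc2 (htzy.trans hc2)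
      _ < δ2 := by linarith
  have hy_est : |ψ y' - ψ y| < δ/4 := by
    have := hδ2 hy'A (by rw [dist_eq_norm]; exact hy'y)
    rwa [Real.dist_eq] at this
  have hnorm : ‖y' - xt‖ ≤ ‖x - y‖ + 3 * c := by
    calc ‖y' - xt‖ ≤ ‖y' - y‖ + ‖y - x‖ + ‖x - xt‖ := by
          have h1 : y' - xt = (y' - y) + (y - x) + (x - xt) := by abel
          rw [h1]; exact norm_add₃_le
      _ ≤ (c + t * ‖z - y‖) + ‖y - x‖ + t * ‖z - x‖ := by
          have h2 : ‖x - xt‖ = t * ‖z - x‖ := by rw [← hxtx, norm_sub_rev]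
          have h3 : ‖y' - y‖ ≤ c + t * ‖z - y‖ := by
            calc ‖y' - y‖ ≤ ‖y' - yt‖ + ‖yt - y‖ := by
                  have : y' - y = (y' - yt) + (yt - y) := by abel
                  rw [this]; exact norm_add_le _ _
              _ ≤ c + t * ‖z - y‖ := by rw [hyty]; exact add_le_add hy'yt.le le_rfl
          rw [h2]
          linarith
      _ ≤ ‖x - y‖ + 3 * c := by
          have hyx : ‖y - x‖ = ‖x - y‖ := norm_sub_rev _ _
          linarith
  have hmc : m * (3 * c) ≤ δ/2 := by
    have h1 : m * (3 * c) ≤ m * (3 * (δ/(8*(m+1)))) := by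
      apply mul_le_mul_of_nonneg_left _ hm0
      linarith
    have h2 : m * (3 * (δ/(8*(m+1)))) ≤ δ/2 := by
      have heq : m * (3 * (δ/(8*(m+1)))) = 3*δ*m/(8*(m+1)) := by ring
      rw [heq, div_le_div_iff₀ (by positivity) (by norm_num : (0:ℝ) < 2)]
      nlinarith
    linarith
  have A1 : |ψ x - ψ y| ≤ |ψ x - ψ xt| + |ψ xt - ψ y| := abs_sub_le _ _ _
  have A2 : |ψ xt - ψ y| ≤ |ψ xt - ψ y'| + |ψ y' - ψ y| := abs_sub_le _ _ _
  have e1 : |ψ x - ψ xt| = |ψ xt - ψ x| := abs_sub_comm _ _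
  have e2 : |ψ xt - ψ y'| = |ψ y' - ψ xt| := abs_sub_comm _ _
  have hmn : m * ‖y' - xt‖ ≤ m * ‖x - y‖ + m * (3 * c) := by
    have := mul_le_mul_of_nonneg_left hnorm hm0
    rw [mul_add] at this
    exact this
  linarith

set_option maxHeartbeats 1000000 in
open InnerProductSpace in
lemma grad_lower {n : ℕ} {ψ : EuclideanSpace ℝ (Fin n) → ℝ} {A : Set (EuclideanSpace ℝ (Fin n))}
    (hA : Convex ℝ A) {z : EuclideanSpace ℝ (Fin n)} {r : ℝ} (hr : 0 < r)
    (hball : Metric.ball z r ⊆ A) {p : EuclideanSpace ℝ (Fin n)} (hp : p ∈ A)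
    (hd : DifferentiableAt ℝ ψ p) {ε : ℝ} (hε : 0 < ε) (hεg : ε < ‖gradient ψ p‖) :
    ∃ a ∈ A, ∃ b ∈ A, a ≠ b ∧ ‖gradient ψ p‖ - ε ≤ |ψ a - ψ b| / dist a b := by
  set g := gradient ψ p with hg
  have hεg' : ε < ‖g‖ := hεg
  have hgne : g ≠ 0 := by
    intro h
    rw [h] at hεg'
    simp at hεg'
    linarith
  have hgpos : 0 < ‖g‖ := norm_pos_iff.2 hgne
  set φ := fderiv ℝ ψ p with hφdef
  have hφ : φ = toDual ℝ (EuclideanSpace ℝ (Fin n)) g := by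
    rw [hφdef, hg, gradient, LinearIsometryEquiv.apply_symm_apply]
  set K : ℝ := ‖z - p‖ + r with hK
  have hKpos : 0 < K := by positivity
  set ε' : ℝ := ε * r / (4 * K) with hε'
  have hε'pos : 0 < ε' := by positivity
  -- little-o estimate
  have hlo := (hasFDerivAt_iff_isLittleO_nhds_zero.1 hd.hasFDerivAt).def hε'pos
  rw [Metric.eventually_nhds_iff] at hlo
  obtain ⟨δ, hδpos, hδ⟩ := hlo
  have hest : ∀ h : EuclideanSpace ℝ (Fin n), ‖h‖ < δ →
      |ψ (p + h) - ψ p - φ h| ≤ ε' * ‖h‖ := by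
    intro h hh
    have := hδ (y := h) (by simpa [dist_eq_norm] using hh)
    simpa [Real.norm_eq_abs] using this
  set t : ℝ := min 1 (δ / (2 * K)) with ht
  have htpos : 0 < t := lt_min one_pos (by positivity)
  have ht1 : t ≤ 1 := min_le_left _ _
  have htK : t * K ≤ δ / 2 := by
    calc t * K ≤ (δ / (2 * K)) * K := mul_le_mul_of_nonneg_right (min_le_right _ _) hKpos.le
      _ = δ / 2 := by field_simp
  set s : ℝ := t * r / (2 * ‖g‖) with hs
  have hspos : 0 < s := by positivity
  set w : EuclideanSpace ℝ (Fin n) := z + (r / (2 * ‖g‖)) • g with hw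
  have hwz : ‖w - z‖ = r / 2 := by
    rw [hw]
    simp only [add_sub_cancel_left, norm_smul, Real.norm_eq_abs]
    rw [abs_of_pos (by positivity)]
    field_simp
  have hwA : w ∈ A := hball (by rw [Metric.mem_ball, dist_eq_norm, hwz]; linarith)
  have hzA : z ∈ A := hball (Metric.mem_ball_self hr)
  set a : EuclideanSpace ℝ (Fin n) := p + t • (z - p) with ha
  set b : EuclideanSpace ℝ (Fin n) := p + t • (w - p) with hb
  have haA : a ∈ A := hA.add_smul_sub_mem hp hzA ⟨htpos.le, ht1⟩
  have hbA : b ∈ A := hA.add_smul_sub_mem hp hwA ⟨htpos.le, ht1⟩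
  have hba : b - a = s • g := by
    rw [hb, ha, hw, hs]
    module
  have hab : a ≠ b := by
    intro h
    have : b - a = 0 := by rw [h]; simp
    rw [hba] at this
    exact hgne (by simpa [smul_eq_zero, hspos.ne'] using this)
  -- norms of displacements
  have hha : ‖t • (z - p)‖ ≤ t * K := by
    rw [norm_smul, Real.norm_eq_abs, abs_of_pos htpos, hK]
    have : (0:ℝ) ≤ t := htpos.le
    nlinarith [norm_nonneg (z - p), hr]
  have hhb : ‖t • (w - p)‖ ≤ t * K := by
    rw [norm_smul, Real.norm_eq_abs, abs_of_pos htpos]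
    have hwp : ‖w - p‖ ≤ K := by
      calc ‖w - p‖ ≤ ‖w - z‖ + ‖z - p‖ := by
            rw [← sub_add_sub_cancel w z p]; exact norm_add_le _ _
        _ = r / 2 + ‖z - p‖ := by rw [hwz]
        _ ≤ K := by rw [hK]; linarith
    exact mul_le_mul_of_nonneg_left hwp htpos.le
  have hδa : ‖t • (z - p)‖ < δ := lt_of_le_of_lt (hha.trans htK) (by linarith)
  have hδb : ‖t • (w - p)‖ < δ := lt_of_le_of_lt (hhb.trans htK) (by linarith)
  have hea := hest _ hδa
  have heb := hest _ hδb
  -- linear part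
  have hφba : φ (t • (w - p)) - φ (t • (z - p)) = s * ‖g‖ ^ 2 := by
    rw [← map_sub]
    have : t • (w - p) - t • (z - p) = b - a := by rw [hb, ha]; abel
    rw [this, hba, hφ, map_smul]
    rw [smul_eq_mul, toDual_apply_apply, real_inner_self_eq_norm_sq]
  have hψa : ψ a = ψ (p + t • (z - p)) := by rw [ha]
  have hψb : ψ b = ψ (p + t • (w - p)) := by rw [hb]
  -- distance
  have hdist : dist a b = t * r / 2 := by
    rw [dist_eq_norm, ← norm_neg, neg_sub, hba, norm_smul, Real.norm_eq_abs,
      abs_of_pos hspos, hs]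
    field_simp
  have hdpos : 0 < dist a b := by rw [hdist]; positivity
  refine ⟨a, haA, b, hbA, hab, ?_⟩
  rw [le_div_iff₀ hdpos]
  have hmain : (‖g‖ - ε) * dist a b ≤ |ψ a - ψ b| := by
    have h1 : |ψ b - ψ a - s * ‖g‖ ^ 2| ≤ ε' * (2 * (t * K)) := by
      have : ψ b - ψ a - s * ‖g‖ ^ 2
          = (ψ (p + t • (w - p)) - ψ p - φ (t • (w - p)))
            - (ψ (p + t • (z - p)) - ψ p - φ (t • (z - p))) := by
        rw [hψa, hψb, ← hφba]; ring
      rw [this]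
      calc |_ - _| ≤ |ψ (p + t • (w - p)) - ψ p - φ (t • (w - p))|
            + |ψ (p + t • (z - p)) - ψ p - φ (t • (z - p))| := abs_sub _ _
        _ ≤ ε' * ‖t • (w - p)‖ + ε' * ‖t • (z - p)‖ := add_le_add heb hea
        _ ≤ ε' * (2 * (t * K)) := by nlinarith
    have h2 : s * ‖g‖ ^ 2 - ε' * (2 * (t * K)) ≤ |ψ b - ψ a| := by
      have := abs_sub_abs_le_abs_sub (ψ b - ψ a) (ψ b - ψ a - (ψ b - ψ a - s * ‖g‖ ^ 2))
      have h3 : s * ‖g‖ ^ 2 - |ψ b - ψ a - s * ‖g‖ ^ 2| ≤ |ψ b - ψ a| := by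
        have habs := abs_sub_abs_le_abs_sub (s * ‖g‖ ^ 2) (s * ‖g‖ ^ 2 - (ψ b - ψ a))
        have h4 : |s * ‖g‖ ^ 2| = s * ‖g‖ ^ 2 := abs_of_pos (by positivity)
        have h5 : |s * ‖g‖ ^ 2 - (s * ‖g‖ ^ 2 - (ψ b - ψ a))| = |ψ b - ψ a| := by
          congr 1; ring
        have h6 : |s * ‖g‖ ^ 2 - (ψ b - ψ a)| = |ψ b - ψ a - s * ‖g‖ ^ 2| := by
          rw [abs_sub_comm]
        rw [h4, h5, h6] at habs
        linarith
      linarith [h1, h3]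
    have h7 : s * ‖g‖ ^ 2 = ‖g‖ * dist a b := by
      rw [hdist, hs]
      field_simp
    have h8 : ε' * (2 * (t * K)) = ε * dist a b := by
      rw [hdist, hε']
      field_simp
      ring
    have h9 : |ψ a - ψ b| = |ψ b - ψ a| := abs_sub_comm _ _
    rw [h9]
    calc (‖g‖ - ε) * dist a b = s * ‖g‖ ^ 2 - ε' * (2 * (t * K)) := by
          rw [h7, h8]; ring
      _ ≤ |ψ b - ψ a| := h2
  exact hmain


/-- Let `ψ : ℝ^n → ℝ`, let `A` be a convex set with nonempty interior, and let `E` be the set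
of vectors with pairwise distinct, non-zero coordinates. If `ψ` is continuous on `A` and
differentiable at every point of `A ∩ E`, then, as elements of `[0,∞]`, the Lipschitz constant
of `ψ|_A` (w.r.t. the Euclidean norm) equals `sup_{x ∈ A ∩ E} |∇ψ(x)|`. -/
theorem lipschitz_restriction_eq_sup_gradient {n : ℕ}
    (ψ : EuclideanSpace ℝ (Fin n) → ℝ) (A : Set (EuclideanSpace ℝ (Fin n)))
    (hA : Convex ℝ A) (hint : (interior A).Nonempty)
    (hcont : ContinuousOn ψ A)
    (hdiff : ∀ x ∈ A ∩ {x : EuclideanSpace ℝ (Fin n) |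
        (∀ i j : Fin n, i ≠ j → x i ≠ x j) ∧ ∀ i, x i ≠ 0},
      DifferentiableAt ℝ ψ x) :
    (⨆ (x : A) (y : A) (_ : (x : EuclideanSpace ℝ (Fin n)) ≠ (y : EuclideanSpace ℝ (Fin n))),
        ENNReal.ofReal (|ψ x - ψ y| / dist (x : EuclideanSpace ℝ (Fin n)) (y : EuclideanSpace ℝ (Fin n)))) =
      ⨆ x : (A ∩ {x : EuclideanSpace ℝ (Fin n) |
          (∀ i j : Fin n, i ≠ j → x i ≠ x j) ∧ ∀ i, x i ≠ 0} : Set (EuclideanSpace ℝ (Fin n))),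
        (‖gradient ψ (x : EuclideanSpace ℝ (Fin n))‖₊ : ℝ≥0∞) := by
  set Est := {x : EuclideanSpace ℝ (Fin n) |
      (∀ i j : Fin n, i ≠ j → x i ≠ x j) ∧ ∀ i, x i ≠ 0} with hEst
  set L := ⨆ (x : A) (y : A) (_ : (x : EuclideanSpace ℝ (Fin n)) ≠ (y : EuclideanSpace ℝ (Fin n))),
      ENNReal.ofReal (|ψ x - ψ y| /
        dist (x : EuclideanSpace ℝ (Fin n)) (y : EuclideanSpace ℝ (Fin n))) with hL
  set M := ⨆ x : (A ∩ Est : Set (EuclideanSpace ℝ (Fin n))),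
      (‖gradient ψ (x : EuclideanSpace ℝ (Fin n))‖₊ : ℝ≥0∞) with hM
  apply le_antisymm
  · -- L ≤ M
    by_cases hMtop : M = ⊤
    · rw [hMtop]; exact le_top
    rw [hL]
    refine iSup_le fun a => iSup_le fun b => iSup_le fun hab => ?_
    set m := M.toReal with hm
    have hm0 : 0 ≤ m := ENNReal.toReal_nonneg
    have hmle : ∀ p ∈ A ∩ Est, ‖gradient ψ p‖ ≤ m := by
      intro p hp
      have h1 : (‖gradient ψ p‖₊ : ℝ≥0∞) ≤ M :=
        le_iSup (fun x : (A ∩ Est : Set (EuclideanSpace ℝ (Fin n))) =>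
          (‖gradient ψ (x : EuclideanSpace ℝ (Fin n))‖₊ : ℝ≥0∞)) ⟨p, hp⟩
      have h2 := ENNReal.toReal_mono hMtop h1
      simpa [coe_nnnorm] using h2
    have hbound := global_bound hA hint hcont hdiff hm0 hmle a.2 b.2
    have hdp : (0:ℝ) < dist (a : EuclideanSpace ℝ (Fin n)) b := dist_pos.2 hab
    have hquot : |ψ a - ψ b| / dist (a : EuclideanSpace ℝ (Fin n)) b ≤ m := by
      rw [div_le_iff₀ hdp, dist_eq_norm]
      exact hbound
    calc ENNReal.ofReal (|ψ a - ψ b| / dist (a : EuclideanSpace ℝ (Fin n)) b)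
        ≤ ENNReal.ofReal m := ENNReal.ofReal_le_ofReal hquot
      _ = M := by rw [hm, ENNReal.ofReal_toReal hMtop]
  · -- M ≤ L
    by_cases hLtop : L = ⊤
    · rw [hLtop]; exact le_top
    rw [hM]
    refine iSup_le fun p => ?_
    set g := gradient ψ (p : EuclideanSpace ℝ (Fin n)) with hg
    obtain ⟨z, hz⟩ := hint
    obtain ⟨r, hrpos, hrball⟩ := Metric.isOpen_iff.1 isOpen_interior z hz
    have hball : Metric.ball z r ⊆ A := hrball.trans interior_subset
    have key : ∀ ε : ℝ, 0 < ε → ‖g‖ - ε ≤ L.toReal := by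
      intro ε hε
      by_cases hεg : ‖g‖ ≤ ε
      · have : ‖g‖ - ε ≤ 0 := by linarith
        exact this.trans ENNReal.toReal_nonneg
      push_neg at hεg
      obtain ⟨a, haA, b, hbA, hab, hineq⟩ :=
        grad_lower hA hrpos hball p.2.1 (hdiff _ p.2) hε hεg
      have hterm : ENNReal.ofReal (|ψ a - ψ b| / dist a b) ≤ L := by
        rw [hL]
        exact le_iSup_of_le ⟨a, haA⟩ (le_iSup_of_le ⟨b, hbA⟩ (le_iSup_of_le hab le_rfl))
      have h1 : ENNReal.ofReal (‖g‖ - ε) ≤ L :=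
        (ENNReal.ofReal_le_ofReal hineq).trans hterm
      have h2 := ENNReal.toReal_mono hLtop h1
      rwa [ENNReal.toReal_ofReal (by linarith)] at h2
    have hgle : ‖g‖ ≤ L.toReal := by
      refine le_of_forall_pos_le_add fun ε hε => ?_
      linarith [key ε hε]
    calc (‖g‖₊ : ℝ≥0∞) = ENNReal.ofReal ‖g‖ := (ofReal_norm g).symm
      _ ≤ ENNReal.ofReal L.toReal := ENNReal.ofReal_le_ofReal hgle
      _ = L := ENNReal.ofReal_toReal hLtop
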